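/- Let Δ be a traceless self-adjoint operator on n qubits and let Φ be a quantum channel (completely positive trace-preserving map) acting on a single qubit i, extended as Φ ⊗ id on the remaining qubits. Then ‖Φ(Δ)‖_{W₁loc} ≤ ‖Δ‖_{W₁loc}, i.e., the local quantum W₁ norm is contracting under the action of single-qubit quantum channels. -/

import Mathlib

open Matrix BigOperators
open scoped ComplexOrder

noncomputable section

namespace QW1

variable {ι : Type*} [Fintype ι] [DecidableEq ι]

/-- The space of (not necessarily Hermitian) operators on a system of qubits labelled by `ι`:
matrices indexed by the computational basis `ι → Fin 2`. -/
abbrev QMat (ι : Type*) [Fintype ι] [DecidableEq ι] :=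
  Matrix (ι → Fin 2) (ι → Fin 2) ℂ

/-- The operator norm (largest singular value) of a matrix. -/
noncomputable def opNorm {d : Type*} [Fintype d] [DecidableEq d] (A : Matrix d d ℂ) : ℝ :=
  ⨆ i, Real.sqrt ((Matrix.isHermitian_conjTranspose_mul_self A).eigenvalues i)

/-- The trace norm (sum of singular values) of a matrix. -/
noncomputable def traceNorm {d : Type*} [Fintype d] [DecidableEq d] (A : Matrix d d ℂ) : ℝ :=
  ∑ i, Real.sqrt ((Matrix.isHermitian_conjTranspose_mul_self A).eigenvalues i)

/-- Combine an assignment of basis states on `Λ` and on its complement into one on all of `ι`. -/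
def merge (Λ : Finset ι) (f : {x // x ∈ Λ} → Fin 2) (g : {x // x ∉ Λ} → Fin 2) (x : ι) :
    Fin 2 :=
  if h : x ∈ Λ then f ⟨x, h⟩ else g ⟨x, h⟩

/-- The partial trace over the qubits outside `Λ`, `Tr_{Λᶜ}`, yielding an operator on the
qubits in `Λ`. -/
noncomputable def ptrace (Λ : Finset ι) (A : QMat ι) :
    Matrix ({x // x ∈ Λ} → Fin 2) ({x // x ∈ Λ} → Fin 2) ℂ :=
  fun f g => ∑ h : {x : ι // x ∉ Λ} → Fin 2, A (merge Λ f h) (merge Λ g h)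

/-- The extension `M ⊗ I_{Λᶜ}` of an operator `M` on the qubits in `Λ` to all the qubits. -/
def embed (Λ : Finset ι)
    (M : Matrix ({x // x ∈ Λ} → Fin 2) ({x // x ∈ Λ} → Fin 2) ℂ) : QMat ι :=
  fun f g =>
    (if ∀ x : ι, x ∉ Λ → f x = g x then
      M (fun x => f x.1) (fun x => g x.1) else 0)

/-- `H` acts on (at most) the qubits in `Λ`: it has the form `H_Λ ⊗ I_{Λᶜ}` with `H_Λ`
self-adjoint. -/
def ActsOn (Λ : Finset ι) (H : QMat ι) : Prop :=
  ∃ M, M.IsHermitian ∧ H = embed Λ M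

/-- The local quantum norm with penalty coefficients `c`. -/
noncomputable def localNorm (c : ℕ → ℝ) (H : QMat ι) : ℝ :=
  sInf { r : ℝ | ∃ F : Finset ι → QMat ι, (∀ Λ, ActsOn Λ (F Λ)) ∧ H = ∑ Λ, F Λ ∧
    r = 2 * ⨆ x : ι, ∑ Λ ∈ Finset.univ.filter (fun Λ : Finset ι => x ∈ Λ),
      c Λ.card * opNorm (F Λ) }

/-- The local quantum `W₁` norm: the dual of the local quantum norm. -/
noncomputable def W1loc (c : ℕ → ℝ) (Δ : QMat ι) : ℝ :=
  sSup { r : ℝ | ∃ H : QMat ι, H.IsHermitian ∧ localNorm c H ≤ 1 ∧ r = ((Δ * H).trace).re }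

/-- The quantum `W₁` norm of De Palma et al. -/
noncomputable def W1 (Δ : QMat ι) : ℝ :=
  sInf { r : ℝ | ∃ D : ι → QMat ι,
    (∀ x, (D x).IsHermitian ∧ (D x).trace = 0 ∧ ptrace ({x}ᶜ : Finset ι) (D x) = 0) ∧
    Δ = ∑ x, D x ∧ r = (1 / 2) * ∑ x, traceNorm (D x) }

/-- Tensor product of operators on two disjoint families of qubits. -/
def tensor {κ : Type*} [Fintype κ] [DecidableEq κ] (A : QMat ι) (B : QMat κ) :
    QMat (ι ⊕ κ) :=
  fun f g => A (f ∘ Sum.inl) (g ∘ Sum.inl) * B (f ∘ Sum.inr) (g ∘ Sum.inr)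

/-- Tensor product of single-qubit operators, one for each qubit. -/
def tensorAll (B : ι → Matrix (Fin 2) (Fin 2) ℂ) : QMat ι :=
  fun f g => ∏ j, B j (f j) (g j)

/-- The four Pauli matrices `I, X, Y, Z`. -/
noncomputable def pauli : Fin 4 → Matrix (Fin 2) (Fin 2) ℂ :=
  ![1, !![0, 1; 1, 0], !![0, -Complex.I; Complex.I, 0], !![1, 0; 0, -1]]

/-- The Pauli operator `σ_{a 1} ⊗ ⋯ ⊗ σ_{a n}`. -/
noncomputable def pauliOp (a : ι → Fin 4) : QMat ι :=
  tensorAll fun j => pauli (a j)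

/-- The weight (locality) of a Pauli operator: the number of non-identity factors. -/
def weight (a : ι → Fin 4) : ℕ :=
  (Finset.univ.filter fun j => a j ≠ 0).card

/-- A quantum state: a positive semidefinite matrix of unit trace. (`PosSemidef` is taken with
respect to the complex order.) -/
def IsState (ρ : QMat ι) : Prop :=
  ρ.PosSemidef ∧ ρ.trace = 1

end QW1

namespace QW1

variable {ι : Type*} [Fintype ι] [DecidableEq ι]

/-- The dependence `∂_x H` of the observable `H` on the qubit `x`. -/
noncomputable def dep (x : ι) (H : QMat ι) : ℝ :=
  2 * sInf { r : ℝ | ∃ K : QMat ι, ActsOn ({x}ᶜ : Finset ι) K ∧ r = opNorm (H - K) }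

/-- The quantum Lipschitz constant `‖H‖_L = max_x ∂_x H`. -/
noncomputable def lipNorm (H : QMat ι) : ℝ :=
  ⨆ x : ι, dep x H

/-- Single-qubit unitaries rotating the eigenbases of the Paulis `Z`, `X`, `Y`
to the computational basis. -/
noncomputable def ubasis : Fin 3 → Matrix (Fin 2) (Fin 2) ℂ :=
  ![1,
    (Real.sqrt 2 : ℂ)⁻¹ • !![1, 1; 1, -1],
    (Real.sqrt 2 : ℂ)⁻¹ • !![1, -Complex.I; 1, Complex.I]]

/-- The single-qubit classical shadow `3 U† |b⟩⟨b| U − I`. -/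
noncomputable def shadow1 (w : Fin 3) (b : Fin 2) : Matrix (Fin 2) (Fin 2) ℂ :=
  (3 : ℂ) • ((ubasis w)ᴴ * Matrix.single b b 1 * ubasis w) - 1

/-- The classical shadow `⊗_j (3 U_j† |b_j⟩⟨b_j| U_j − I)` of the Pauli measurement
primitive associated with the sampled basis choices and outcomes `s`. -/
noncomputable def shadowOf (s : ι → Fin 3 × Fin 2) : QMat ι :=
  tensorAll fun j => shadow1 (s j).1 (s j).2

/-- The probability of the sample `s` (a uniformly random Pauli basis measured on each qubit,
with outcomes distributed with the Born probability `⟨b|UρU†|b⟩`) when measuring one copy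
of `ρ` in the Pauli measurement primitive. -/
noncomputable def shadowPMF (ρ : QMat ι) (s : ι → Fin 3 × Fin 2) : ℝ :=
  ((3 : ℝ) ^ Fintype.card ι)⁻¹ *
    (((tensorAll fun j => ubasis (s j).1) * ρ * (tensorAll fun j => ubasis (s j).1)ᴴ)
      (fun j => (s j).2) (fun j => (s j).2)).re

open Classical in
/-- The probability that `N` independent classical shadows of `ρ` (from the Pauli
measurement primitive) satisfy the event `E`. -/
noncomputable def shadowProb (ρ : QMat ι) (N : ℕ)
    (E : (Fin N → ι → Fin 3 × Fin 2) → Prop) : ℝ :=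
  ∑ ω : Fin N → ι → Fin 3 × Fin 2, if E ω then ∏ i, shadowPMF ρ (ω i) else 0

/-- Extension of a single-qubit operator `K` on the qubit `i`, acting as the identity on the
remaining qubits. -/
noncomputable def oneSite (i : ι) (K : Matrix (Fin 2) (Fin 2) ℂ) : QMat ι :=
  tensorAll fun j => if j = i then K else 1

/-- Logarithm of a Hermitian matrix via its spectral decomposition (junk value otherwise). -/
noncomputable def mlog {d : Type*} [Fintype d] [DecidableEq d] (A : Matrix d d ℂ) :
    Matrix d d ℂ :=
  if hA : A.IsHermitian then
    (hA.eigenvectorUnitary : Matrix d d ℂ) *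
      Matrix.diagonal (fun i => (Real.log (hA.eigenvalues i) : ℂ)) *
      star (hA.eigenvectorUnitary : Matrix d d ℂ)
  else 0

/-- The quantum relative entropy `S(ρ‖σ) = Tr[ρ(ln ρ − ln σ)]`. -/
noncomputable def relEnt (ρ σ : QMat ι) : ℝ :=
  ((ρ * (mlog ρ - mlog σ)).trace).re

/-- The Gibbs state `e^{−H} / Tr e^{−H}`. -/
noncomputable def gibbs (H : QMat ι) : QMat ι :=
  ((NormedSpace.exp (-H)).trace)⁻¹ • NormedSpace.exp (-H)

end QW1


namespace QW1

section SpectralAux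

variable {d : Type*} [Fintype d] [DecidableEq d]

lemma dot_star_self (u : d → ℂ) :
    dotProduct (star u) u = ((∑ p, Complex.normSq (u p) : ℝ) : ℂ) := by
  rw [dotProduct]; push_cast
  refine Finset.sum_congr rfl fun p _ => ?_
  rw [Pi.star_apply, Complex.star_def, ← Complex.normSq_eq_conj_mul_self]

lemma quad_diag (U : Matrix d d ℂ) (hU : U ∈ Matrix.unitaryGroup d ℂ) (μ : d → ℝ)
    (v : d → ℂ) :
    dotProduct (star v) ((U * Matrix.diagonal (fun p => (μ p : ℂ)) * star U) *ᵥ v)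
      = ((∑ p, μ p * Complex.normSq ((star U *ᵥ v) p) : ℝ) : ℂ) := by
  set w : d → ℂ := star U *ᵥ v with hw
  have h1 : (U * Matrix.diagonal (fun p => (μ p : ℂ)) * star U) *ᵥ v
      = U *ᵥ (Matrix.diagonal (fun p => (μ p : ℂ)) *ᵥ w) := by
    rw [hw, mulVec_mulVec, mulVec_mulVec]
  rw [h1, dotProduct_mulVec (star v) U]
  have h2 : star v ᵥ* U = star w := by
    rw [hw, star_mulVec]
    simp [Matrix.star_eq_conjTranspose]
  rw [h2]
  have h3 : ∀ p, (Matrix.diagonal (fun p => (μ p : ℂ)) *ᵥ w) p = (μ p : ℂ) * w p := by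
    intro p; rw [mulVec_diagonal]
  rw [dotProduct]
  push_cast
  refine Finset.sum_congr rfl fun p _ => ?_
  rw [Pi.star_apply, h3 p, Complex.star_def]
  rw [show (starRingEnd ℂ) (w p) * ((μ p : ℂ) * w p) = (μ p : ℂ) * ((starRingEnd ℂ) (w p) * w p) by ring]
  rw [← Complex.normSq_eq_conj_mul_self]

lemma sum_normSq_star_unitary (U : Matrix d d ℂ) (hU : U ∈ Matrix.unitaryGroup d ℂ)
    (v : d → ℂ) :
    ∑ p, Complex.normSq ((star U *ᵥ v) p) = ∑ p, Complex.normSq (v p) := by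
  have key : dotProduct (star (star U *ᵥ v)) (star U *ᵥ v) = dotProduct (star v) v := by
    rw [star_mulVec]
    simp only [Matrix.star_eq_conjTranspose, conjTranspose_conjTranspose]
    rw [← dotProduct_mulVec, mulVec_mulVec, ← Matrix.star_eq_conjTranspose,
      (Matrix.mem_unitaryGroup_iff).mp hU, one_mulVec]
  rw [dot_star_self, dot_star_self] at key
  exact_mod_cast key

lemma herm_quad {X : Matrix d d ℂ} (hX : X.IsHermitian) (v : d → ℂ) :
    dotProduct (star v) (X *ᵥ v)
      = ((∑ p, hX.eigenvalues p *
          Complex.normSq ((star (hX.eigenvectorUnitary : Matrix d d ℂ) *ᵥ v) p) : ℝ) : ℂ) := by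
  conv_lhs => rw [hX.spectral_theorem]
  exact quad_diag _ (hX.eigenvectorUnitary).2 _ v

lemma quad_le_of_eig_le {X : Matrix d d ℂ} (hX : X.IsHermitian) {b : ℝ}
    (hb : ∀ p, hX.eigenvalues p ≤ b) (v : d → ℂ) :
    (dotProduct (star v) (X *ᵥ v)).re ≤ b * ∑ p, Complex.normSq (v p) := by
  rw [herm_quad hX v, Complex.ofReal_re]
  calc ∑ p, hX.eigenvalues p *
        Complex.normSq ((star (hX.eigenvectorUnitary : Matrix d d ℂ) *ᵥ v) p)
      ≤ ∑ p, b * Complex.normSq ((star (hX.eigenvectorUnitary : Matrix d d ℂ) *ᵥ v) p) := by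
        refine Finset.sum_le_sum fun p _ => ?_
        exact mul_le_mul_of_nonneg_right (hb p) (Complex.normSq_nonneg _)
    _ = b * ∑ p, Complex.normSq ((star (hX.eigenvectorUnitary : Matrix d d ℂ) *ᵥ v) p) := by
        rw [Finset.mul_sum]
    _ = b * ∑ p, Complex.normSq (v p) := by
        rw [sum_normSq_star_unitary _ (hX.eigenvectorUnitary).2]

lemma quad_ge_of_eig_ge {X : Matrix d d ℂ} (hX : X.IsHermitian) {a : ℝ}
    (ha : ∀ p, a ≤ hX.eigenvalues p) (v : d → ℂ) :
    a * ∑ p, Complex.normSq (v p) ≤ (dotProduct (star v) (X *ᵥ v)).re := by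
  rw [herm_quad hX v, Complex.ofReal_re]
  calc a * ∑ p, Complex.normSq (v p)
      = a * ∑ p, Complex.normSq ((star (hX.eigenvectorUnitary : Matrix d d ℂ) *ᵥ v) p) := by
        rw [sum_normSq_star_unitary _ (hX.eigenvectorUnitary).2]
    _ = ∑ p, a * Complex.normSq ((star (hX.eigenvectorUnitary : Matrix d d ℂ) *ᵥ v) p) := by
        rw [Finset.mul_sum]
    _ ≤ _ := by
        refine Finset.sum_le_sum fun p _ => ?_
        exact mul_le_mul_of_nonneg_right (ha p) (Complex.normSq_nonneg _)

lemma sum_normSq_eigenvectorBasis {P : Matrix d d ℂ} (hP : P.IsHermitian) (p : d) :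
    ∑ q, Complex.normSq ((hP.eigenvectorBasis p : EuclideanSpace ℂ d) q) = 1 := by
  have h1 : ‖hP.eigenvectorBasis p‖ = 1 := hP.eigenvectorBasis.orthonormal.1 p
  rw [EuclideanSpace.norm_eq] at h1
  have := Real.sqrt_eq_one.mp h1
  rw [← this]
  refine Finset.sum_congr rfl fun q _ => ?_
  rw [Complex.sq_norm]

lemma eig_le_of_quad_le {P : Matrix d d ℂ} (hP : P.IsHermitian) {b : ℝ}
    (h : ∀ v : d → ℂ, (dotProduct (star v) (P *ᵥ v)).re ≤ b * ∑ q, Complex.normSq (v q))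
    (p : d) : hP.eigenvalues p ≤ b := by
  have h1 : hP.eigenvalues p
      = (dotProduct (star ⇑(hP.eigenvectorBasis p)) (P *ᵥ ⇑(hP.eigenvectorBasis p))).re :=
    hP.eigenvalues_eq p
  have h2 := h ⇑(hP.eigenvectorBasis p)
  have h3 : ∑ q, Complex.normSq (⇑(hP.eigenvectorBasis p) q) = 1 :=
    sum_normSq_eigenvectorBasis hP p
  rw [h3, mul_one] at h2
  rw [h1]
  exact h2

lemma eig_ge_of_quad_ge {P : Matrix d d ℂ} (hP : P.IsHermitian) {a : ℝ}
    (h : ∀ v : d → ℂ, a * ∑ q, Complex.normSq (v q) ≤ (dotProduct (star v) (P *ᵥ v)).re)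
    (p : d) : a ≤ hP.eigenvalues p := by
  have h1 : hP.eigenvalues p
      = (dotProduct (star ⇑(hP.eigenvectorBasis p)) (P *ᵥ ⇑(hP.eigenvectorBasis p))).re :=
    hP.eigenvalues_eq p
  have h2 := h ⇑(hP.eigenvectorBasis p)
  have h3 : ∑ q, Complex.normSq (⇑(hP.eigenvectorBasis p) q) = 1 :=
    sum_normSq_eigenvectorBasis hP p
  rw [h3, mul_one] at h2
  rw [h1]
  exact h2

lemma herm_smul_one_sub {X : Matrix d d ℂ} (hX : X.IsHermitian) (b : ℝ) :
    ((b : ℂ) • (1 : Matrix d d ℂ) - X).IsHermitian := by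
  have h1 : ((b : ℂ) • (1 : Matrix d d ℂ)).IsHermitian := by
    unfold Matrix.IsHermitian
    rw [conjTranspose_smul, conjTranspose_one, Complex.star_def, Complex.conj_ofReal]
  exact h1.sub hX

lemma herm_smul_one_add {X : Matrix d d ℂ} (hX : X.IsHermitian) (b : ℝ) :
    ((b : ℂ) • (1 : Matrix d d ℂ) + X).IsHermitian := by
  have h1 : ((b : ℂ) • (1 : Matrix d d ℂ)).IsHermitian := by
    unfold Matrix.IsHermitian
    rw [conjTranspose_smul, conjTranspose_one, Complex.star_def, Complex.conj_ofReal]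
  exact h1.add hX

lemma quad_smul_one_sub {X : Matrix d d ℂ} (b : ℝ) (v : d → ℂ) :
    dotProduct (star v) (((b : ℂ) • (1 : Matrix d d ℂ) - X) *ᵥ v)
      = (b : ℂ) * ((∑ p, Complex.normSq (v p) : ℝ) : ℂ) - dotProduct (star v) (X *ᵥ v) := by
  rw [sub_mulVec, dotProduct_sub, smul_mulVec, one_mulVec, dotProduct_smul,
    dot_star_self, smul_eq_mul]

lemma quad_smul_one_add {X : Matrix d d ℂ} (b : ℝ) (v : d → ℂ) :
    dotProduct (star v) (((b : ℂ) • (1 : Matrix d d ℂ) + X) *ᵥ v)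
      = (b : ℂ) * ((∑ p, Complex.normSq (v p) : ℝ) : ℂ) + dotProduct (star v) (X *ᵥ v) := by
  rw [add_mulVec, dotProduct_add, smul_mulVec, one_mulVec, dotProduct_smul,
    dot_star_self, smul_eq_mul]

lemma psd_smul_one_sub {X : Matrix d d ℂ} (hX : X.IsHermitian) {b : ℝ}
    (hb : ∀ p, hX.eigenvalues p ≤ b) :
    ((b : ℂ) • (1 : Matrix d d ℂ) - X).PosSemidef := by
  refine PosSemidef.of_dotProduct_mulVec_nonneg (herm_smul_one_sub hX b) fun v => ?_
  rw [quad_smul_one_sub, herm_quad hX v, ← Complex.ofReal_mul, ← Complex.ofReal_sub]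
  rw [Complex.zero_le_real]
  have h2 : ∑ p, hX.eigenvalues p *
        Complex.normSq ((star (hX.eigenvectorUnitary : Matrix d d ℂ) *ᵥ v) p)
      ≤ b * ∑ p, Complex.normSq (v p) := by
    have := quad_le_of_eig_le hX hb v
    rwa [herm_quad hX v, Complex.ofReal_re] at this
  linarith

lemma psd_smul_one_add {X : Matrix d d ℂ} (hX : X.IsHermitian) {b : ℝ}
    (hb : ∀ p, -b ≤ hX.eigenvalues p) :
    ((b : ℂ) • (1 : Matrix d d ℂ) + X).PosSemidef := by
  refine PosSemidef.of_dotProduct_mulVec_nonneg (herm_smul_one_add hX b) fun v => ?_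
  rw [quad_smul_one_add, herm_quad hX v, ← Complex.ofReal_mul, ← Complex.ofReal_add]
  rw [Complex.zero_le_real]
  have h2 : -b * ∑ p, Complex.normSq (v p) ≤ ∑ p, hX.eigenvalues p *
        Complex.normSq ((star (hX.eigenvectorUnitary : Matrix d d ℂ) *ᵥ v) p) := by
    have := quad_ge_of_eig_ge hX hb v
    rwa [herm_quad hX v, Complex.ofReal_re] at this
  linarith

lemma opNorm_nonneg (A : Matrix d d ℂ) : 0 ≤ opNorm A :=
  Real.iSup_nonneg fun _ => Real.sqrt_nonneg _

lemma sqrt_eig_le_opNorm (A : Matrix d d ℂ) (p : d) :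
    Real.sqrt ((Matrix.isHermitian_conjTranspose_mul_self A).eigenvalues p) ≤ opNorm A := by
  unfold opNorm
  exact le_ciSup (f := fun i : d =>
    Real.sqrt ((Matrix.isHermitian_conjTranspose_mul_self A).eigenvalues i))
    (Set.Finite.bddAbove (Set.finite_range _)) p

lemma herm_sq_spectral {Y : Matrix d d ℂ} (hY : Y.IsHermitian) :
    Yᴴ * Y = (hY.eigenvectorUnitary : Matrix d d ℂ) *
      Matrix.diagonal (fun p => ((hY.eigenvalues p ^ 2 : ℝ) : ℂ)) *
      star (hY.eigenvectorUnitary : Matrix d d ℂ) := by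
  have hD : (Matrix.diagonal (fun p => ((hY.eigenvalues p : ℝ) : ℂ))) *
      (Matrix.diagonal (fun p => ((hY.eigenvalues p : ℝ) : ℂ)))
      = Matrix.diagonal (fun p => ((hY.eigenvalues p ^ 2 : ℝ) : ℂ)) := by
    rw [diagonal_mul_diagonal]
    congr 1; funext p; push_cast; ring
  have h0 : Yᴴ * Y = Y * Y := by rw [hY.eq]
  rw [h0]
  conv_lhs => rw [hY.spectral_theorem]
  set U := (hY.eigenvectorUnitary : Matrix d d ℂ)
  have hUU : star U * U = 1 := (Matrix.mem_unitaryGroup_iff').mp (hY.eigenvectorUnitary).2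
  have : (RCLike.ofReal ∘ hY.eigenvalues : d → ℂ) = fun p => ((hY.eigenvalues p : ℝ) : ℂ) := rfl
  rw [this]
  calc (U * Matrix.diagonal (fun p => ((hY.eigenvalues p : ℝ) : ℂ)) * star U) *
        (U * Matrix.diagonal (fun p => ((hY.eigenvalues p : ℝ) : ℂ)) * star U)
      = U * (Matrix.diagonal (fun p => ((hY.eigenvalues p : ℝ) : ℂ)) * (star U * U) *
          Matrix.diagonal (fun p => ((hY.eigenvalues p : ℝ) : ℂ))) * star U := by
        simp only [Matrix.mul_assoc]
    _ = U * Matrix.diagonal (fun p => ((hY.eigenvalues p ^ 2 : ℝ) : ℂ)) * star U := by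
        rw [hUU, Matrix.mul_one, hD, Matrix.mul_assoc]

lemma herm_eig_abs_le_opNorm {X : Matrix d d ℂ} (hX : X.IsHermitian) (p : d) :
    |hX.eigenvalues p| ≤ opNorm X := by
  set B := opNorm X with hB
  have hBnn : 0 ≤ B := opNorm_nonneg X
  -- quad bound for Xᴴ * X
  have hquad : ∀ v : d → ℂ, (dotProduct (star v) ((Xᴴ * X) *ᵥ v)).re
      ≤ B ^ 2 * ∑ q, Complex.normSq (v q) := by
    intro v
    refine quad_le_of_eig_le (Matrix.isHermitian_conjTranspose_mul_self X) (fun q => ?_) v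
    have h1 : Real.sqrt ((Matrix.isHermitian_conjTranspose_mul_self X).eigenvalues q) ≤ B :=
      sqrt_eig_le_opNorm X q
    have h2 := Matrix.eigenvalues_conjTranspose_mul_self_nonneg X q
    calc (Matrix.isHermitian_conjTranspose_mul_self X).eigenvalues q
        = Real.sqrt ((Matrix.isHermitian_conjTranspose_mul_self X).eigenvalues q) ^ 2 :=
          (Real.sq_sqrt h2).symm
      _ ≤ B ^ 2 := by
          exact pow_le_pow_left₀ (Real.sqrt_nonneg _) h1 2
  -- eigenvector of X is eigenvector of XᴴX with λ²
  set e : d → ℂ := ⇑(hX.eigenvectorBasis p) with he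
  have heig : (Xᴴ * X) *ᵥ e = (hX.eigenvalues p ^ 2 : ℝ) • e := by
    rw [← mulVec_mulVec, hX.mulVec_eigenvectorBasis, mulVec_smul, hX.eq,
      hX.mulVec_eigenvectorBasis, smul_smul, ← pow_two]
  have hnorm : ∑ q, Complex.normSq (e q) = 1 := sum_normSq_eigenvectorBasis hX p
  have hval : (dotProduct (star e) ((Xᴴ * X) *ᵥ e)).re = hX.eigenvalues p ^ 2 := by
    rw [heig]
    have : dotProduct (star e) ((hX.eigenvalues p ^ 2 : ℝ) • e)
        = ((hX.eigenvalues p ^ 2 : ℝ) : ℂ) * dotProduct (star e) e := by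
      rw [dotProduct, dotProduct, Finset.mul_sum]
      refine Finset.sum_congr rfl fun q _ => ?_
      rw [Pi.smul_apply, Complex.real_smul]
      ring
    rw [this, dot_star_self, hnorm, Complex.ofReal_one, mul_one, Complex.ofReal_re]
  have := hquad e
  rw [hval, hnorm, mul_one] at this
  calc |hX.eigenvalues p| = Real.sqrt (hX.eigenvalues p ^ 2) := (Real.sqrt_sq_eq_abs _).symm
    _ ≤ Real.sqrt (B ^ 2) := Real.sqrt_le_sqrt this
    _ = B := Real.sqrt_sq hBnn

lemma opNorm_le_of_sandwich {Y : Matrix d d ℂ} (hY : Y.IsHermitian) {b : ℝ} (hb : 0 ≤ b)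
    (h1 : ((b : ℂ) • (1 : Matrix d d ℂ) - Y).PosSemidef)
    (h2 : ((b : ℂ) • (1 : Matrix d d ℂ) + Y).PosSemidef) :
    opNorm Y ≤ b := by
  -- eigenvalue bounds for Y
  have hle : ∀ p, hY.eigenvalues p ≤ b := by
    refine eig_le_of_quad_le hY (fun v => ?_)
    have h3 := h1.dotProduct_mulVec_nonneg v
    rw [quad_smul_one_sub] at h3
    have h4 : (0:ℝ) ≤ ((b : ℂ) * ((∑ p, Complex.normSq (v p) : ℝ) : ℂ)
        - dotProduct (star v) (Y *ᵥ v)).re := by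
      rw [Complex.le_def] at h3; exact h3.1
    rw [Complex.sub_re, Complex.mul_re] at h4
    simp only [Complex.ofReal_re, Complex.ofReal_im, mul_zero, sub_zero] at h4
    linarith
  have hge : ∀ p, -b ≤ hY.eigenvalues p := by
    refine eig_ge_of_quad_ge hY (fun v => ?_)
    have h3 := h2.dotProduct_mulVec_nonneg v
    rw [quad_smul_one_add] at h3
    have h4 : (0:ℝ) ≤ ((b : ℂ) * ((∑ p, Complex.normSq (v p) : ℝ) : ℂ)
        + dotProduct (star v) (Y *ᵥ v)).re := by
      rw [Complex.le_def] at h3; exact h3.1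
    rw [Complex.add_re, Complex.mul_re] at h4
    simp only [Complex.ofReal_re, Complex.ofReal_im, mul_zero, sub_zero] at h4
    linarith
  -- quad bound for YᴴY
  have hquad : ∀ v : d → ℂ, (dotProduct (star v) ((Yᴴ * Y) *ᵥ v)).re
      ≤ b ^ 2 * ∑ q, Complex.normSq (v q) := by
    intro v
    rw [herm_sq_spectral hY, quad_diag _ (hY.eigenvectorUnitary).2, Complex.ofReal_re]
    calc ∑ p, hY.eigenvalues p ^ 2 *
          Complex.normSq ((star (hY.eigenvectorUnitary : Matrix d d ℂ) *ᵥ v) p)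
        ≤ ∑ p, b ^ 2 *
          Complex.normSq ((star (hY.eigenvectorUnitary : Matrix d d ℂ) *ᵥ v) p) := by
          refine Finset.sum_le_sum fun p _ => ?_
          refine mul_le_mul_of_nonneg_right ?_ (Complex.normSq_nonneg _)
          have habs : |hY.eigenvalues p| ≤ b := abs_le.mpr ⟨hge p, hle p⟩
          calc hY.eigenvalues p ^ 2 = |hY.eigenvalues p| ^ 2 := (sq_abs _).symm
            _ ≤ b ^ 2 := pow_le_pow_left₀ (abs_nonneg _) habs 2
      _ = b ^ 2 * ∑ p, Complex.normSq ((star (hY.eigenvectorUnitary : Matrix d d ℂ) *ᵥ v) p) := by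
          rw [Finset.mul_sum]
      _ = _ := by rw [sum_normSq_star_unitary _ (hY.eigenvectorUnitary).2]
  have heigs : ∀ p, (Matrix.isHermitian_conjTranspose_mul_self Y).eigenvalues p ≤ b ^ 2 :=
    eig_le_of_quad_le _ hquad
  unfold opNorm
  refine Real.iSup_le (fun p => ?_) hb
  calc Real.sqrt ((Matrix.isHermitian_conjTranspose_mul_self Y).eigenvalues p)
      ≤ Real.sqrt (b ^ 2) := Real.sqrt_le_sqrt (heigs p)
    _ = b := Real.sqrt_sq hb

lemma psd_sum {κ : Type*} (s : Finset κ) (f : κ → Matrix d d ℂ)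
    (h : ∀ j ∈ s, (f j).PosSemidef) : (∑ j ∈ s, f j).PosSemidef :=
  Finset.sum_induction f _ (fun _ _ ha hb => ha.add hb) Matrix.PosSemidef.zero h

lemma opNorm_kraus_le {κ : Type*} [Fintype κ] (A : κ → Matrix d d ℂ)
    (hA : ∑ j, (A j)ᴴ * A j = 1) {B : Matrix d d ℂ} (hB : B.IsHermitian) :
    opNorm (∑ j, (A j)ᴴ * B * A j) ≤ opNorm B := by
  set b := opNorm B with hbdef
  have hbnn : 0 ≤ b := opNorm_nonneg B
  have hle : ∀ p, hB.eigenvalues p ≤ b := fun p => (abs_le.mp (herm_eig_abs_le_opNorm hB p)).2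
  have hge : ∀ p, -b ≤ hB.eigenvalues p := fun p => (abs_le.mp (herm_eig_abs_le_opNorm hB p)).1
  have h1 : ((b : ℂ) • (1 : Matrix d d ℂ) - B).PosSemidef := psd_smul_one_sub hB hle
  have h2 : ((b : ℂ) • (1 : Matrix d d ℂ) + B).PosSemidef := psd_smul_one_add hB hge
  set Y := ∑ j, (A j)ᴴ * B * A j with hYdef
  have hYherm : Y.IsHermitian := by
    unfold Matrix.IsHermitian
    rw [hYdef, conjTranspose_sum]
    refine Finset.sum_congr rfl fun j _ => ?_
    rw [conjTranspose_mul, conjTranspose_mul, conjTranspose_conjTranspose, hB.eq,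
      Matrix.mul_assoc]
  have key : ∀ (C : Matrix d d ℂ), ∑ j, (A j)ᴴ * C * A j
      = ∑ j, ((A j)ᴴ * C * A j) := fun _ => rfl
  have expand : ∀ (C : Matrix d d ℂ),
      ∑ j, (A j)ᴴ * ((b : ℂ) • (1 : Matrix d d ℂ) + C) * A j
      = (b : ℂ) • (1 : Matrix d d ℂ) + ∑ j, (A j)ᴴ * C * A j := by
    intro C
    have : ∀ j : κ, (A j)ᴴ * ((b : ℂ) • (1 : Matrix d d ℂ) + C) * A j
        = (b : ℂ) • ((A j)ᴴ * A j) + (A j)ᴴ * C * A j := by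
      intro j
      rw [Matrix.mul_add, Matrix.add_mul, Matrix.mul_smul, Matrix.mul_one, Matrix.smul_mul]
    rw [Finset.sum_congr rfl fun j _ => this j, Finset.sum_add_distrib, ← Finset.smul_sum, hA]
  have S1 : ((b : ℂ) • (1 : Matrix d d ℂ) - Y).PosSemidef := by
    have := psd_sum Finset.univ (fun j => (A j)ᴴ * ((b : ℂ) • (1 : Matrix d d ℂ) - B) * A j)
      (fun j _ => h1.conjTranspose_mul_mul_same (A j))
    have heq : ∑ j, (A j)ᴴ * ((b : ℂ) • (1 : Matrix d d ℂ) - B) * A j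
        = (b : ℂ) • (1 : Matrix d d ℂ) - Y := by
      rw [sub_eq_add_neg, expand (-B), hYdef]
      rw [show ∑ j, (A j)ᴴ * (-B) * A j = -∑ j, (A j)ᴴ * B * A j by
        rw [← Finset.sum_neg_distrib]
        refine Finset.sum_congr rfl fun j _ => by rw [Matrix.mul_neg, Matrix.neg_mul]]
      rw [← sub_eq_add_neg]
    rwa [heq] at this
  have S2 : ((b : ℂ) • (1 : Matrix d d ℂ) + Y).PosSemidef := by
    have := psd_sum Finset.univ (fun j => (A j)ᴴ * ((b : ℂ) • (1 : Matrix d d ℂ) + B) * A j)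
      (fun j _ => h2.conjTranspose_mul_mul_same (A j))
    rwa [expand B, ← hYdef] at this
  exact opNorm_le_of_sandwich hYherm hbnn S1 S2


lemma kraus_isHermitian {κ : Type*} [Fintype κ] (A : κ → Matrix d d ℂ)
    {B : Matrix d d ℂ} (hB : B.IsHermitian) :
    (∑ j, (A j)ᴴ * B * A j).IsHermitian := by
  unfold Matrix.IsHermitian
  rw [conjTranspose_sum]
  refine Finset.sum_congr rfl fun j _ => ?_
  rw [conjTranspose_mul, conjTranspose_mul, conjTranspose_conjTranspose, hB.eq,
    Matrix.mul_assoc]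

lemma herm_trace {P : Matrix d d ℂ} (hP : P.IsHermitian) :
    P.trace = ((∑ p, hP.eigenvalues p : ℝ) : ℂ) := by
  conv_lhs => rw [hP.spectral_theorem]
  rw [Unitary.conjStarAlgAut_apply]
  rw [trace_mul_comm, ← Matrix.mul_assoc,
    (Matrix.mem_unitaryGroup_iff').mp (hP.eigenvectorUnitary).2, Matrix.one_mul,
    trace_diagonal]
  push_cast
  rfl

lemma trace_conjTranspose_mul_self (A : Matrix d d ℂ) :
    (Aᴴ * A).trace = ((∑ fg : d × d, Complex.normSq (A fg.1 fg.2) : ℝ) : ℂ) := by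
  rw [Matrix.trace]
  push_cast
  rw [Fintype.sum_prod_type]
  rw [Finset.sum_comm]
  refine Finset.sum_congr rfl fun g _ => ?_
  rw [Matrix.diag_apply, Matrix.mul_apply]
  refine Finset.sum_congr rfl fun f _ => ?_
  rw [Matrix.conjTranspose_apply, Complex.star_def, ← Complex.normSq_eq_conj_mul_self]

lemma sum_normSq_le_card_mul_opNorm_sq (A : Matrix d d ℂ) :
    ∑ fg : d × d, Complex.normSq (A fg.1 fg.2) ≤ (Fintype.card d) * (opNorm A) ^ 2 := by
  have h1 : ((∑ fg : d × d, Complex.normSq (A fg.1 fg.2) : ℝ) : ℂ)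
      = ((∑ p, (Matrix.isHermitian_conjTranspose_mul_self A).eigenvalues p : ℝ) : ℂ) := by
    rw [← trace_conjTranspose_mul_self, herm_trace (Matrix.isHermitian_conjTranspose_mul_self A)]
  have h2 : ∑ fg : d × d, Complex.normSq (A fg.1 fg.2)
      = ∑ p, (Matrix.isHermitian_conjTranspose_mul_self A).eigenvalues p := by exact_mod_cast h1
  rw [h2]
  have h3 : ∀ p, (Matrix.isHermitian_conjTranspose_mul_self A).eigenvalues p ≤ (opNorm A) ^ 2 := by
    intro p
    have hnn := Matrix.eigenvalues_conjTranspose_mul_self_nonneg A p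
    have hle : Real.sqrt ((Matrix.isHermitian_conjTranspose_mul_self A).eigenvalues p) ≤ opNorm A := by
      unfold opNorm
      exact le_ciSup (f := fun i : d =>
        Real.sqrt ((Matrix.isHermitian_conjTranspose_mul_self A).eigenvalues i))
        (Set.Finite.bddAbove (Set.finite_range _)) p
    calc (Matrix.isHermitian_conjTranspose_mul_self A).eigenvalues p
        = Real.sqrt ((Matrix.isHermitian_conjTranspose_mul_self A).eigenvalues p) ^ 2 :=
          (Real.sq_sqrt hnn).symm
      _ ≤ (opNorm A) ^ 2 := pow_le_pow_left₀ (Real.sqrt_nonneg _) hle 2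
  calc ∑ p, (Matrix.isHermitian_conjTranspose_mul_self A).eigenvalues p
      ≤ ∑ _p : d, (opNorm A) ^ 2 := Finset.sum_le_sum fun p _ => h3 p
    _ = (Fintype.card d) * (opNorm A) ^ 2 := by
        rw [Finset.sum_const, Finset.card_univ, nsmul_eq_mul]

/-- Cauchy-Schwarz bound on the trace of a product. -/
lemma abs_re_trace_mul_le (Δ F : Matrix d d ℂ) :
    |((Δ * F).trace).re| ≤ Real.sqrt (∑ fg : d × d, Complex.normSq (Δ fg.1 fg.2)) *
      Real.sqrt (∑ fg : d × d, Complex.normSq (F fg.1 fg.2)) := by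
  have h0 : (Δ * F).trace = ∑ fg : d × d, Δ fg.1 fg.2 * F fg.2 fg.1 := by
    rw [Matrix.trace, Fintype.sum_prod_type]
    refine Finset.sum_congr rfl fun f _ => ?_
    rw [Matrix.diag_apply, Matrix.mul_apply]
  have h1 : |((Δ * F).trace).re| ≤ ‖(Δ * F).trace‖ := Complex.abs_re_le_norm _
  set a := ∑ fg : d × d, ‖Δ fg.1 fg.2‖ * ‖F fg.2 fg.1‖ with ha_def
  have ha : 0 ≤ a := Finset.sum_nonneg fun _ _ => mul_nonneg (norm_nonneg _) (norm_nonneg _)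
  have h2 : ‖(Δ * F).trace‖ ≤ a := by
    rw [h0]
    refine le_trans (norm_sum_le _ _) ?_
    refine Finset.sum_le_sum fun fg _ => ?_
    rw [norm_mul]
  have hswap : ∑ fg : d × d, ‖F fg.2 fg.1‖ ^ 2 = ∑ fg : d × d, ‖F fg.1 fg.2‖ ^ 2 := by
    exact Fintype.sum_equiv (Equiv.prodComm d d) _ _ fun fg => rfl
  have hcs : a ^ 2 ≤ (∑ fg : d × d, ‖Δ fg.1 fg.2‖ ^ 2) * (∑ fg : d × d, ‖F fg.1 fg.2‖ ^ 2) := by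
    rw [← hswap]
    exact Finset.sum_mul_sq_le_sq_mul_sq _ _ _
  have hnsq : ∀ (G : Matrix d d ℂ), ∑ fg : d × d, ‖G fg.1 fg.2‖ ^ 2
      = ∑ fg : d × d, Complex.normSq (G fg.1 fg.2) := by
    intro G
    refine Finset.sum_congr rfl fun fg _ => ?_
    rw [Complex.sq_norm]
  have h3 : a ≤ Real.sqrt (∑ fg : d × d, Complex.normSq (Δ fg.1 fg.2)) *
      Real.sqrt (∑ fg : d × d, Complex.normSq (F fg.1 fg.2)) := by
    rw [← hnsq Δ, ← hnsq F, ← Real.sqrt_mul (Finset.sum_nonneg fun _ _ => sq_nonneg _)]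
    calc a = Real.sqrt (a ^ 2) := (Real.sqrt_sq ha).symm
      _ ≤ _ := Real.sqrt_le_sqrt hcs
  linarith


lemma opNorm_zero : opNorm (0 : Matrix d d ℂ) = 0 := by
  have hsum : ((∑ p, (Matrix.isHermitian_conjTranspose_mul_self (0 : Matrix d d ℂ)).eigenvalues p : ℝ) : ℂ) = 0 := by
    rw [← herm_trace (Matrix.isHermitian_conjTranspose_mul_self (0 : Matrix d d ℂ))]
    rw [Matrix.mul_zero, Matrix.trace_zero]
  have hsum' : (∑ p, (Matrix.isHermitian_conjTranspose_mul_self (0 : Matrix d d ℂ)).eigenvalues p : ℝ) = 0 := by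
    exact_mod_cast hsum
  have hz : ∀ p, (Matrix.isHermitian_conjTranspose_mul_self (0 : Matrix d d ℂ)).eigenvalues p = 0 :=
    fun p => (Finset.sum_eq_zero_iff_of_nonneg
      (fun q _ => Matrix.eigenvalues_conjTranspose_mul_self_nonneg _ q)).mp hsum' p
      (Finset.mem_univ p)
  refine le_antisymm (Real.iSup_le (fun p => ?_) le_rfl) (opNorm_nonneg 0)
  rw [hz p, Real.sqrt_zero]

end SpectralAux

section TensorAux

variable {ι : Type*} [Fintype ι] [DecidableEq ι]

/-! tensorAll lemmas -/

lemma tensorAll_mul (A B : ι → Matrix (Fin 2) (Fin 2) ℂ) :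
    tensorAll A * tensorAll B = tensorAll (fun j => A j * B j) := by
  ext f g
  rw [Matrix.mul_apply]
  unfold tensorAll
  have : ∀ j, (A j * B j) (f j) (g j) = ∑ b : Fin 2, A j (f j) b * B j b (g j) := fun j =>
    Matrix.mul_apply
  simp only [this]
  rw [Finset.prod_univ_sum]
  rw [Fintype.piFinset_univ]
  refine Finset.sum_congr rfl fun h _ => ?_
  rw [Finset.prod_mul_distrib]

lemma tensorAll_conjTranspose (A : ι → Matrix (Fin 2) (Fin 2) ℂ) :
    (tensorAll A)ᴴ = tensorAll (fun j => (A j)ᴴ) := by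
  ext f g
  rw [Matrix.conjTranspose_apply]
  unfold tensorAll
  rw [star_prod]
  refine Finset.prod_congr rfl fun j _ => ?_
  rfl

lemma oneSite_mul (i : ι) (A B : Matrix (Fin 2) (Fin 2) ℂ) :
    oneSite i A * oneSite i B = oneSite i (A * B) := by
  unfold oneSite
  rw [tensorAll_mul]
  refine congrArg tensorAll (funext fun j => ?_)
  by_cases h : j = i
  · simp [h]
  · simp [h]

lemma oneSite_conjTranspose (i : ι) (K : Matrix (Fin 2) (Fin 2) ℂ) :
    (oneSite i K)ᴴ = oneSite i Kᴴ := by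
  unfold oneSite
  rw [tensorAll_conjTranspose]
  refine congrArg tensorAll (funext fun j => ?_)
  by_cases h : j = i
  · simp [h]
  · simp [h]

lemma oneSite_one (i : ι) : oneSite i (1 : Matrix (Fin 2) (Fin 2) ℂ) = 1 := by
  unfold oneSite tensorAll
  ext f g
  simp only [ite_self]
  by_cases h : f = g
  · subst h
    rw [Matrix.one_apply_eq]
    refine Finset.prod_eq_one fun j _ => Matrix.one_apply_eq _
  · rw [Matrix.one_apply_ne h]
    obtain ⟨j, hj⟩ : ∃ j, f j ≠ g j := by
      by_contra hc
      push_neg at hc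
      exact h (funext hc)
    exact Finset.prod_eq_zero (Finset.mem_univ j) (Matrix.one_apply_ne hj)

lemma oneSite_sum {κ : Type*} [Fintype κ] (i : ι) (C : κ → Matrix (Fin 2) (Fin 2) ℂ) :
    ∑ j : κ, oneSite i (C j) = oneSite i (∑ j : κ, C j) := by
  unfold oneSite tensorAll
  ext f g
  erw [Matrix.sum_apply]
  have hfac : ∀ (K : Matrix (Fin 2) (Fin 2) ℂ),
      (∏ j, (if j = i then K else 1) (f j) (g j))
        = K (f i) (g i) * ∏ j ∈ Finset.univ.erase i, (1 : Matrix (Fin 2) (Fin 2) ℂ) (f j) (g j) := by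
    intro K
    rw [← Finset.mul_prod_erase Finset.univ _ (Finset.mem_univ i)]
    rw [if_pos rfl]
    congr 1
    refine Finset.prod_congr rfl fun j hj => ?_
    rw [if_neg (Finset.ne_of_mem_erase hj)]
  simp only [hfac]
  rw [← Finset.sum_mul]
  congr 1
  rw [Matrix.sum_apply]

/-! embed lemmas -/

lemma embed_conjTranspose (Λ : Finset ι)
    (M : Matrix ({x // x ∈ Λ} → Fin 2) ({x // x ∈ Λ} → Fin 2) ℂ) :
    (embed Λ M)ᴴ = embed Λ Mᴴ := by
  ext f g
  rw [Matrix.conjTranspose_apply]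
  unfold embed
  have hiff : (∀ x : ι, x ∉ Λ → g x = f x) ↔ (∀ x : ι, x ∉ Λ → f x = g x) := by
    constructor <;> intro h x hx <;> exact (h x hx).symm
  split_ifs with h1 h2 h2
  · rw [Matrix.conjTranspose_apply]
  · exact absurd (hiff.mp h1) h2
  · exact absurd (hiff.mpr h2) h1
  · exact star_zero ℂ

lemma embed_isHermitian {Λ : Finset ι}
    {M : Matrix ({x // x ∈ Λ} → Fin 2) ({x // x ∈ Λ} → Fin 2) ℂ} (hM : M.IsHermitian) :
    (embed Λ M).IsHermitian := by
  unfold Matrix.IsHermitian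
  rw [embed_conjTranspose, hM.eq]

lemma embed_sum {κ : Type*} [Fintype κ] (Λ : Finset ι)
    (M : κ → Matrix ({x // x ∈ Λ} → Fin 2) ({x // x ∈ Λ} → Fin 2) ℂ) :
    ∑ j : κ, embed Λ (M j) = embed Λ (∑ j : κ, M j) := by
  ext f g
  rw [Matrix.sum_apply]
  unfold embed
  split_ifs with h
  · rw [Matrix.sum_apply]
  · exact Finset.sum_const_zero

lemma embed_mul (Λ : Finset ι)
    (M N : Matrix ({x // x ∈ Λ} → Fin 2) ({x // x ∈ Λ} → Fin 2) ℂ) :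
    embed Λ M * embed Λ N = embed Λ (M * N) := by
  classical
  ext f g
  rw [Matrix.mul_apply]
  set e := Equiv.piEquivPiSubtypeProd (fun x => x ∈ Λ) (fun _ : ι => Fin 2) with he
  set fΛ : {x // x ∈ Λ} → Fin 2 := fun x => f x.1 with hfΛ
  set gΛ : {x // x ∈ Λ} → Fin 2 := fun x => g x.1 with hgΛ
  set bf : {x // ¬ x ∈ Λ} → Fin 2 := fun x => f x.1 with hbf
  set bg : {x // ¬ x ∈ Λ} → Fin 2 := fun x => g x.1 with hbg
  have hsum : ∑ h : ι → Fin 2, embed Λ M f h * embed Λ N h g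
      = ∑ p : ({x // x ∈ Λ} → Fin 2) × ({x // ¬ x ∈ Λ} → Fin 2),
          embed Λ M f (e.symm p) * embed Λ N (e.symm p) g := (Equiv.sum_comp e.symm _).symm
  rw [hsum, Fintype.sum_prod_type]
  have hs : ∀ (a : {x // x ∈ Λ} → Fin 2) (b : {x // ¬ x ∈ Λ} → Fin 2) (x : ι),
      e.symm (a, b) x = if h : x ∈ Λ then a ⟨x, h⟩ else b ⟨x, h⟩ := fun a b x => rfl
  have hres : ∀ (a : {x // x ∈ Λ} → Fin 2) (b : {x // ¬ x ∈ Λ} → Fin 2),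
      (fun x : {x // x ∈ Λ} => e.symm (a, b) x.1) = a := by
    intro a b; funext x
    rw [hs, dif_pos x.2]
  have h1 : ∀ (a : {x // x ∈ Λ} → Fin 2) (b : {x // ¬ x ∈ Λ} → Fin 2),
      embed Λ M f (e.symm (a, b)) = if b = bf then M fΛ a else 0 := by
    intro a b
    unfold embed
    have hcond : (∀ x : ι, x ∉ Λ → f x = e.symm (a, b) x) ↔ b = bf := by
      constructor
      · intro h
        funext x
        have := h x.1 x.2
        rw [hs, dif_neg x.2] at this
        exact this.symm
      · intro h x hx
        rw [hs, dif_neg hx, h]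
    exact if_congr hcond (by rw [hres]) rfl
  have h2 : ∀ (a : {x // x ∈ Λ} → Fin 2) (b : {x // ¬ x ∈ Λ} → Fin 2),
      embed Λ N (e.symm (a, b)) g = if b = bg then N a gΛ else 0 := by
    intro a b
    unfold embed
    have hcond : (∀ x : ι, x ∉ Λ → e.symm (a, b) x = g x) ↔ b = bg := by
      constructor
      · intro h
        funext x
        have := h x.1 x.2
        rw [hs, dif_neg x.2] at this
        exact this
      · intro h x hx
        rw [hs, dif_neg hx, h]
    exact if_congr hcond (by rw [hres]) rfl
  simp only [h1, h2]
  have hinner : ∀ a : {x // x ∈ Λ} → Fin 2,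
      ∑ b : {x // ¬ x ∈ Λ} → Fin 2, (if b = bf then M fΛ a else 0) * (if b = bg then N a gΛ else 0)
      = if bf = bg then M fΛ a * N a gΛ else 0 := by
    intro a
    by_cases hbb : bf = bg
    · rw [if_pos hbb, ← hbb]
      have : ∀ b : {x // ¬ x ∈ Λ} → Fin 2,
          (if b = bf then M fΛ a else 0) * (if b = bf then N a gΛ else 0)
            = if b = bf then M fΛ a * N a gΛ else 0 := by
        intro b; split_ifs <;> ring
      simp only [this]
      rw [Finset.sum_ite_eq' Finset.univ bf (fun _ => M fΛ a * N a gΛ)]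
      rw [if_pos (Finset.mem_univ bf)]
    · rw [if_neg hbb]
      refine Finset.sum_eq_zero fun b _ => ?_
      split_ifs with hb1 hb2
      · exact absurd (hb1 ▸ hb2 : bf = bg) hbb
      · exact mul_zero _
      · exact zero_mul _
      · exact zero_mul _
  simp only [hinner]
  have hcondfg : (∀ x : ι, x ∉ Λ → f x = g x) ↔ bf = bg := by
    constructor
    · intro h; funext x; exact h x.1 x.2
    · intro h x hx
      have := congrFun h (⟨x, hx⟩ : {x // ¬ x ∈ Λ})
      exact this
  unfold embed
  by_cases hbb : bf = bg
  · simp only [if_pos hbb, if_pos (hcondfg.mpr hbb)]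
    rw [Matrix.mul_apply]
  · simp only [if_neg hbb, if_neg (fun hc => hbb (hcondfg.mp hc))]
    exact Finset.sum_const_zero

lemma prod_one_apply_compl (Λ : Finset ι) (f g : ι → Fin 2) :
    (∏ j ∈ Λᶜ, (1 : Matrix (Fin 2) (Fin 2) ℂ) (f j) (g j))
      = if ∀ x : ι, x ∉ Λ → f x = g x then 1 else 0 := by
  split_ifs with h
  · refine Finset.prod_eq_one fun j hj => ?_
    rw [h j (Finset.mem_compl.mp hj), Matrix.one_apply_eq]
  · push_neg at h
    obtain ⟨j, hj, hne⟩ := h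
    exact Finset.prod_eq_zero (Finset.mem_compl.mpr hj) (Matrix.one_apply_ne hne)

lemma oneSite_eq_embed {i : ι} {Λ : Finset ι} (h : i ∈ Λ) (A : Matrix (Fin 2) (Fin 2) ℂ) :
    oneSite i A = embed Λ (oneSite (⟨i, h⟩ : {x // x ∈ Λ}) A) := by
  ext f g
  unfold oneSite tensorAll embed
  rw [← Finset.prod_mul_prod_compl Λ (fun j => (if j = i then A else 1) (f j) (g j))]
  have hcompl : (∏ j ∈ Λᶜ, (if j = i then A else 1) (f j) (g j))
      = ∏ j ∈ Λᶜ, (1 : Matrix (Fin 2) (Fin 2) ℂ) (f j) (g j) := by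
    refine Finset.prod_congr rfl fun j hj => ?_
    rw [if_neg]
    intro hji
    exact (Finset.mem_compl.mp hj) (hji ▸ h)
  rw [hcompl, prod_one_apply_compl]
  have hin : (∏ j ∈ Λ, (if j = i then A else 1) (f j) (g j))
      = ∏ x : {x // x ∈ Λ}, (if x = (⟨i, h⟩ : {x // x ∈ Λ}) then A else 1) (f x.1) (g x.1) := by
    rw [← Finset.prod_coe_sort Λ (fun j => (if j = i then A else 1) (f j) (g j))]
    refine Finset.prod_congr rfl fun x _ => ?_
    congr 1
    by_cases hx : x.1 = i
    · rw [if_pos hx, if_pos (Subtype.ext hx)]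
    · rw [if_neg hx, if_neg (fun hc => hx (congrArg Subtype.val hc))]
  rw [hin]
  split_ifs with hc
  · rw [mul_one]
  · rw [mul_zero]

/-- collapsing a sum against the off-site delta of `oneSite` -/
lemma sum_delta_collapse (i : ι) (f : ι → Fin 2) (C : (ι → Fin 2) → ℂ) :
    ∑ h : ι → Fin 2,
      (∏ j ∈ Finset.univ.erase i, (1 : Matrix (Fin 2) (Fin 2) ℂ) (f j) (h j)) * C h
      = ∑ b : Fin 2, C (Function.update f i b) := by
  classical
  have key : ∀ h : ι → Fin 2, (∏ j ∈ Finset.univ.erase i, (1 : Matrix (Fin 2) (Fin 2) ℂ) (f j) (h j))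
      = if ∀ j, j ≠ i → h j = f j then 1 else 0 := by
    intro h
    split_ifs with hcond
    · refine Finset.prod_eq_one fun j hj => ?_
      rw [hcond j (Finset.mem_erase.mp hj).1, Matrix.one_apply_eq]
    · push_neg at hcond
      obtain ⟨j, hji, hval⟩ := hcond
      refine Finset.prod_eq_zero (Finset.mem_erase.mpr ⟨hji, Finset.mem_univ j⟩) ?_
      exact Matrix.one_apply_ne (fun hfj => hval hfj.symm)
  calc ∑ h : ι → Fin 2,
        (∏ j ∈ Finset.univ.erase i, (1 : Matrix (Fin 2) (Fin 2) ℂ) (f j) (h j)) * C h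
      = ∑ h : ι → Fin 2, if ∀ j, j ≠ i → h j = f j then C h else 0 := by
        refine Finset.sum_congr rfl fun h _ => ?_
        rw [key h]
        split_ifs <;> simp
    _ = ∑ h ∈ Finset.univ.filter (fun h : ι → Fin 2 => ∀ j, j ≠ i → h j = f j), C h :=
        (Finset.sum_filter _ _).symm
    _ = ∑ b : Fin 2, C (Function.update f i b) := by
        have himg : Finset.univ.filter (fun h : ι → Fin 2 => ∀ j, j ≠ i → h j = f j)
            = Finset.image (fun b => Function.update f i b) Finset.univ := by
          ext h
          simp only [Finset.mem_filter, Finset.mem_univ, true_and, Finset.mem_image]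
          constructor
          · intro hc
            refine ⟨h i, ?_⟩
            funext j
            by_cases hj : j = i
            · subst hj; rw [Function.update_self]
            · rw [Function.update_of_ne hj, (hc j hj)]
          · rintro ⟨b, rfl⟩ j hj
            rw [Function.update_of_ne hj]
        rw [himg, Finset.sum_image]
        intro b _ b' _ hbb
        have := congrFun hbb i
        beta_reduce at this
        rwa [Function.update_self, Function.update_self] at this

lemma oneSite_apply_eq (i : ι) (A : Matrix (Fin 2) (Fin 2) ℂ) (f g : ι → Fin 2) :
    oneSite i A f g = A (f i) (g i) *
      ∏ j ∈ Finset.univ.erase i, (1 : Matrix (Fin 2) (Fin 2) ℂ) (f j) (g j) := by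
  unfold oneSite tensorAll
  rw [← Finset.mul_prod_erase Finset.univ _ (Finset.mem_univ i)]
  beta_reduce
  rw [if_pos rfl]
  congr 1
  refine Finset.prod_congr rfl fun j hj => ?_
  rw [if_neg (Finset.ne_of_mem_erase hj)]

lemma oneSite_comm_embed {i : ι} {Λ : Finset ι} (h : i ∉ Λ) (A : Matrix (Fin 2) (Fin 2) ℂ)
    (M : Matrix ({x // x ∈ Λ} → Fin 2) ({x // x ∈ Λ} → Fin 2) ℂ) :
    oneSite i A * embed Λ M = embed Λ M * oneSite i A := by
  classical
  ext f g
  rw [Matrix.mul_apply, Matrix.mul_apply]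
  -- LHS
  have hL : ∑ h' : ι → Fin 2, oneSite i A f h' * embed Λ M h' g
      = ∑ b : Fin 2, A (f i) b * embed Λ M (Function.update f i b) g := by
    have : ∀ h' : ι → Fin 2, oneSite i A f h' * embed Λ M h' g
        = (∏ j ∈ Finset.univ.erase i, (1 : Matrix (Fin 2) (Fin 2) ℂ) (f j) (h' j)) *
          (A (f i) (h' i) * embed Λ M h' g) := by
      intro h'
      rw [oneSite_apply_eq]
      ring
    simp only [this]
    rw [sum_delta_collapse i f (fun h' => A (f i) (h' i) * embed Λ M h' g)]
    refine Finset.sum_congr rfl fun b _ => ?_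
    rw [Function.update_self]
  have hR : ∑ h' : ι → Fin 2, embed Λ M f h' * oneSite i A h' g
      = ∑ b : Fin 2, embed Λ M f (Function.update g i b) * A b (g i) := by
    have : ∀ h' : ι → Fin 2, embed Λ M f h' * oneSite i A h' g
        = (∏ j ∈ Finset.univ.erase i, (1 : Matrix (Fin 2) (Fin 2) ℂ) (g j) (h' j)) *
          (A (h' i) (g i) * embed Λ M f h') := by
      intro h'
      rw [oneSite_apply_eq]
      have : ∀ j, (1 : Matrix (Fin 2) (Fin 2) ℂ) (h' j) (g j)
          = (1 : Matrix (Fin 2) (Fin 2) ℂ) (g j) (h' j) := by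
        intro j
        by_cases hj : h' j = g j
        · rw [hj]
        · rw [Matrix.one_apply_ne hj, Matrix.one_apply_ne (fun hc => hj hc.symm)]
      simp only [this]
      ring
    simp only [this]
    rw [sum_delta_collapse i g (fun h' => A (h' i) (g i) * embed Λ M f h')]
    refine Finset.sum_congr rfl fun b _ => ?_
    rw [Function.update_self]
    ring
  rw [hL, hR]
  -- now compute both sides explicitly
  have hMf : ∀ b, embed Λ M (Function.update f i b) g
      = if (∀ x : ι, x ∉ Λ → x ≠ i → f x = g x) ∧ b = g i then M (fun x => f x.1) (fun x => g x.1)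
        else 0 := by
    intro b
    unfold embed
    have harg : (fun x : {x // x ∈ Λ} => Function.update f i b x.1) = (fun x : {x // x ∈ Λ} => f x.1) := by
      funext x
      rw [Function.update_of_ne (fun hc => h (by rw [← hc]; exact x.2))]
    have hcond : (∀ x : ι, x ∉ Λ → Function.update f i b x = g x)
        ↔ ((∀ x : ι, x ∉ Λ → x ≠ i → f x = g x) ∧ b = g i) := by
      constructor
      · intro hc
        constructor
        · intro x hx hxi
          have := hc x hx
          rwa [Function.update_of_ne hxi] at this
        · have := hc i h
          rwa [Function.update_self] at this
      · rintro ⟨hc, rfl⟩ x hx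
        by_cases hxi : x = i
        · subst hxi; rw [Function.update_self]
        · rw [Function.update_of_ne hxi]; exact hc x hx hxi
    rw [harg]
    exact if_congr hcond rfl rfl
  have hMg : ∀ b, embed Λ M f (Function.update g i b)
      = if (∀ x : ι, x ∉ Λ → x ≠ i → f x = g x) ∧ b = f i then M (fun x => f x.1) (fun x => g x.1)
        else 0 := by
    intro b
    unfold embed
    have harg : (fun x : {x // x ∈ Λ} => Function.update g i b x.1) = (fun x : {x // x ∈ Λ} => g x.1) := by
      funext x
      rw [Function.update_of_ne (fun hc => h (by rw [← hc]; exact x.2))]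
    have hcond : (∀ x : ι, x ∉ Λ → f x = Function.update g i b x)
        ↔ ((∀ x : ι, x ∉ Λ → x ≠ i → f x = g x) ∧ b = f i) := by
      constructor
      · intro hc
        constructor
        · intro x hx hxi
          have := hc x hx
          rwa [Function.update_of_ne hxi] at this
        · have := hc i h
          rw [Function.update_self] at this
          exact this.symm
      · rintro ⟨hc, rfl⟩ x hx
        by_cases hxi : x = i
        · subst hxi; rw [Function.update_self]
        · rw [Function.update_of_ne hxi]; exact hc x hx hxi
    rw [harg]
    exact if_congr hcond rfl rfl
  simp only [hMf, hMg]
  by_cases hc : ∀ x : ι, x ∉ Λ → x ≠ i → f x = g x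
  · rw [Finset.sum_eq_single (g i) (fun b _ hb => by rw [if_neg (fun hp => hb hp.2), mul_zero])
      (fun hmem => absurd (Finset.mem_univ _) hmem)]
    rw [Finset.sum_eq_single (f i) (fun b _ hb => by rw [if_neg (fun hp => hb hp.2), zero_mul])
      (fun hmem => absurd (Finset.mem_univ _) hmem)]
    rw [if_pos ⟨hc, rfl⟩, if_pos ⟨hc, rfl⟩]
    ring
  · rw [Finset.sum_eq_zero (fun b _ => by rw [if_neg (fun hp => hc hp.1), mul_zero]),
      Finset.sum_eq_zero (fun b _ => by rw [if_neg (fun hp => hc hp.1), zero_mul])]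

lemma embed_zero (Λ : Finset ι) : embed Λ (0 : Matrix ({x // x ∈ Λ} → Fin 2) ({x // x ∈ Λ} → Fin 2) ℂ) = 0 := by
  ext f g
  unfold embed
  split_ifs <;> rfl

lemma embed_empty_eq_smul_one
    (M : Matrix ({x // x ∈ (∅ : Finset ι)} → Fin 2) ({x // x ∈ (∅ : Finset ι)} → Fin 2) ℂ)
    (e0 : {x // x ∈ (∅ : Finset ι)} → Fin 2) :
    embed (∅ : Finset ι) M = M e0 e0 • (1 : QMat ι) := by
  ext f g
  unfold embed
  have hcond : (∀ x : ι, x ∉ (∅ : Finset ι) → f x = g x) ↔ f = g := by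
    constructor
    · intro h; funext x; exact h x (Finset.notMem_empty x)
    · intro h x _; rw [h]
  have hM : ∀ (a b : {x // x ∈ (∅ : Finset ι)} → Fin 2), M a b = M e0 e0 := by
    intro a b
    have ha : a = e0 := funext fun x => absurd x.2 (Finset.notMem_empty x.1)
    have hb : b = e0 := funext fun x => absurd x.2 (Finset.notMem_empty x.1)
    rw [ha, hb]
  rw [Matrix.smul_apply]
  by_cases hfg : f = g
  · rw [if_pos (hcond.mpr hfg), hfg, Matrix.one_apply_eq, hM, smul_eq_mul, mul_one]
  · rw [if_neg (fun hc => hfg (hcond.mp hc)), Matrix.one_apply_ne hfg, smul_eq_mul, mul_zero]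


lemma oneSite_kraus_sum {m : ℕ} (i : ι) (K : Fin m → Matrix (Fin 2) (Fin 2) ℂ)
    (hK : ∑ j, (K j)ᴴ * K j = 1) :
    ∑ j, (oneSite i (K j))ᴴ * oneSite i (K j) = (1 : QMat ι) := by
  have h1 : ∀ j, (oneSite i (K j))ᴴ * oneSite i (K j) = oneSite i ((K j)ᴴ * K j) := by
    intro j
    rw [oneSite_conjTranspose, oneSite_mul]
  simp only [h1]
  rw [oneSite_sum, hK, oneSite_one]

lemma actsOn_zero (Λ : Finset ι) : ActsOn Λ (0 : QMat ι) :=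
  ⟨0, Matrix.isHermitian_zero, (embed_zero Λ).symm⟩

lemma actsOn_univ {H : QMat ι} (hH : H.IsHermitian) : ActsOn (Finset.univ : Finset ι) H := by
  refine ⟨fun a b => H (fun x => a ⟨x, Finset.mem_univ x⟩) (fun x => b ⟨x, Finset.mem_univ x⟩),
    ?_, ?_⟩
  · unfold Matrix.IsHermitian
    ext a b
    exact congrFun (congrFun hH.eq _) _
  · ext f g
    unfold embed
    rw [if_pos (fun x hx => absurd (Finset.mem_univ x) hx)]

/-- the adjoint channel preserves `ActsOn Λ` -/
lemma actsOn_adjoint {m : ℕ} (i : ι) (K : Fin m → Matrix (Fin 2) (Fin 2) ℂ)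
    (hK : ∑ j, (K j)ᴴ * K j = 1) {Λ : Finset ι} {F : QMat ι} (hF : ActsOn Λ F) :
    ActsOn Λ (∑ j, (oneSite i (K j))ᴴ * F * oneSite i (K j)) := by
  obtain ⟨M, hM, rfl⟩ := hF
  by_cases hiΛ : i ∈ Λ
  · refine ⟨∑ j, (oneSite (⟨i, hiΛ⟩ : {x // x ∈ Λ}) (K j))ᴴ * M *
      oneSite (⟨i, hiΛ⟩ : {x // x ∈ Λ}) (K j), kraus_isHermitian _ hM, ?_⟩
    have hterm : ∀ j, (oneSite i (K j))ᴴ * embed Λ M * oneSite i (K j)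
        = embed Λ ((oneSite (⟨i, hiΛ⟩ : {x // x ∈ Λ}) (K j))ᴴ * M *
            oneSite (⟨i, hiΛ⟩ : {x // x ∈ Λ}) (K j)) := by
      intro j
      rw [oneSite_eq_embed hiΛ (K j), embed_conjTranspose, embed_mul, embed_mul]
    simp only [hterm]
    rw [embed_sum]
  · have hterm : ∀ j, (oneSite i (K j))ᴴ * embed Λ M * oneSite i (K j)
        = embed Λ M * ((oneSite i ((K j)ᴴ)) * oneSite i (K j)) := by
      intro j
      rw [oneSite_conjTranspose, oneSite_comm_embed hiΛ, Matrix.mul_assoc]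
    have : ∑ j, (oneSite i (K j))ᴴ * embed Λ M * oneSite i (K j) = embed Λ M := by
      simp only [hterm]
      rw [← Finset.mul_sum]
      have h2 : ∑ j, oneSite i ((K j)ᴴ) * oneSite i (K j) = (1 : QMat ι) := by
        have h3 : ∀ j, oneSite i ((K j)ᴴ) * oneSite i (K j) = oneSite i ((K j)ᴴ * K j) :=
          fun j => oneSite_mul i _ _
        simp only [h3]
        rw [oneSite_sum, hK, oneSite_one]
      rw [h2, Matrix.mul_one]
    rw [this]
    exact ⟨M, hM, rfl⟩

end TensorAux

section MainAux

variable {n : ℕ}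

lemma c_ge_one (c : ℕ → ℝ) (hc1 : c 1 = 1)
    (hcmono : ∀ k l, 1 ≤ k → k ≤ l → l ≤ n → c k ≤ c l)
    {Λ : Finset (Fin n)} {x : Fin n} (hx : x ∈ Λ) : 1 ≤ c Λ.card := by
  have h1 : 1 ≤ Λ.card := Finset.card_pos.mpr ⟨x, hx⟩
  have h2 : Λ.card ≤ n := by
    have h3 := Finset.card_le_univ Λ
    rwa [Fintype.card_fin] at h3
  rw [← hc1]
  exact hcmono 1 Λ.card le_rfl h1 h2

lemma siteSum_nonneg (c : ℕ → ℝ) (hc1 : c 1 = 1)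
    (hcmono : ∀ k l, 1 ≤ k → k ≤ l → l ≤ n → c k ≤ c l)
    (F : Finset (Fin n) → QMat (Fin n)) (x : Fin n) :
    0 ≤ ∑ Λ ∈ Finset.univ.filter (fun Λ : Finset (Fin n) => x ∈ Λ),
      c Λ.card * opNorm (F Λ) := by
  refine Finset.sum_nonneg fun Λ hΛ => ?_
  have hx : x ∈ Λ := (Finset.mem_filter.mp hΛ).2
  exact mul_nonneg (le_trans zero_le_one (c_ge_one c hc1 hcmono hx)) (opNorm_nonneg _)

lemma localNorm_set_nonneg (c : ℕ → ℝ) (hc1 : c 1 = 1)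
    (hcmono : ∀ k l, 1 ≤ k → k ≤ l → l ≤ n → c k ≤ c l)
    (H : QMat (Fin n)) :
    ∀ r ∈ { r : ℝ | ∃ F : Finset (Fin n) → QMat (Fin n),
      (∀ Λ, ActsOn Λ (F Λ)) ∧ H = ∑ Λ, F Λ ∧
      r = 2 * ⨆ x : Fin n, ∑ Λ ∈ Finset.univ.filter (fun Λ : Finset (Fin n) => x ∈ Λ),
        c Λ.card * opNorm (F Λ) }, 0 ≤ r := by
  rintro r ⟨F, _, _, rfl⟩
  have h1 : 0 ≤ ⨆ x : Fin n, ∑ Λ ∈ Finset.univ.filter (fun Λ : Finset (Fin n) => x ∈ Λ),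
      c Λ.card * opNorm (F Λ) :=
    Real.iSup_nonneg fun x => siteSum_nonneg c hc1 hcmono F x
  linarith

lemma localNorm_set_nonempty (c : ℕ → ℝ) {H : QMat (Fin n)} (hH : H.IsHermitian) :
    ∃ r, r ∈ { r : ℝ | ∃ F : Finset (Fin n) → QMat (Fin n),
      (∀ Λ, ActsOn Λ (F Λ)) ∧ H = ∑ Λ, F Λ ∧
      r = 2 * ⨆ x : Fin n, ∑ Λ ∈ Finset.univ.filter (fun Λ : Finset (Fin n) => x ∈ Λ),
        c Λ.card * opNorm (F Λ) } := by
  classical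
  refine ⟨_, ⟨fun Λ => if Λ = Finset.univ then H else 0, fun Λ => ?_, ?_, rfl⟩⟩
  · beta_reduce
    by_cases hΛ : Λ = Finset.univ
    · subst hΛ
      rw [if_pos rfl]
      exact actsOn_univ hH
    · rw [if_neg hΛ]
      exact actsOn_zero Λ
  · beta_reduce
    rw [Finset.sum_ite_eq' Finset.univ Finset.univ (fun _ => H), if_pos (Finset.mem_univ _)]

lemma localNorm_zero_le_one (c : ℕ → ℝ) (hc1 : c 1 = 1)
    (hcmono : ∀ k l, 1 ≤ k → k ≤ l → l ≤ n → c k ≤ c l) :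
    localNorm c (0 : QMat (Fin n)) ≤ 1 := by
  classical
  unfold localNorm
  have hmem : (0 : ℝ) ∈ { r : ℝ | ∃ F : Finset (Fin n) → QMat (Fin n),
      (∀ Λ, ActsOn Λ (F Λ)) ∧ (0 : QMat (Fin n)) = ∑ Λ, F Λ ∧
      r = 2 * ⨆ x : Fin n, ∑ Λ ∈ Finset.univ.filter (fun Λ : Finset (Fin n) => x ∈ Λ),
        c Λ.card * opNorm (F Λ) } := by
    refine ⟨fun _ => 0, fun Λ => actsOn_zero Λ, by rw [Finset.sum_const_zero], ?_⟩
    have h1 : ∀ x : Fin n, ∑ Λ ∈ Finset.univ.filter (fun Λ : Finset (Fin n) => x ∈ Λ),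
        c Λ.card * opNorm ((0 : QMat (Fin n))) = 0 := by
      intro x
      refine Finset.sum_eq_zero fun Λ _ => ?_
      rw [opNorm_zero, mul_zero]
    have h2 : (⨆ x : Fin n, ∑ Λ ∈ Finset.univ.filter (fun Λ : Finset (Fin n) => x ∈ Λ),
        c Λ.card * opNorm ((0 : QMat (Fin n)))) = 0 := by
      refine le_antisymm (Real.iSup_le (fun x => le_of_eq (h1 x)) le_rfl) ?_
      exact Real.iSup_nonneg fun x => le_of_eq (h1 x).symm
    rw [h2, mul_zero]
  have hbdd : BddBelow { r : ℝ | ∃ F : Finset (Fin n) → QMat (Fin n),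
      (∀ Λ, ActsOn Λ (F Λ)) ∧ (0 : QMat (Fin n)) = ∑ Λ, F Λ ∧
      r = 2 * ⨆ x : Fin n, ∑ Λ ∈ Finset.univ.filter (fun Λ : Finset (Fin n) => x ∈ Λ),
        c Λ.card * opNorm (F Λ) } :=
    ⟨0, fun r hr => localNorm_set_nonneg c hc1 hcmono 0 r hr⟩
  exact le_trans (csInf_le hbdd hmem) zero_le_one

/-- key lemma: the adjoint channel contracts the local norm -/
lemma localNorm_adjoint_le {m : ℕ} (c : ℕ → ℝ) (hc1 : c 1 = 1)
    (hcmono : ∀ k l, 1 ≤ k → k ≤ l → l ≤ n → c k ≤ c l)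
    (i : Fin n) (K : Fin m → Matrix (Fin 2) (Fin 2) ℂ)
    (hK : ∑ j, (K j)ᴴ * K j = 1)
    {H : QMat (Fin n)} (hH : H.IsHermitian) :
    localNorm c (∑ j, (oneSite i (K j))ᴴ * H * oneSite i (K j)) ≤ localNorm c H := by
  classical
  unfold localNorm
  refine le_csInf (localNorm_set_nonempty c hH) ?_
  rintro b ⟨F, hF1, hF2, rfl⟩
  set G : Finset (Fin n) → QMat (Fin n) :=
    fun Λ => ∑ j, (oneSite i (K j))ᴴ * F Λ * oneSite i (K j) with hG
  have hGacts : ∀ Λ, ActsOn Λ (G Λ) := fun Λ => actsOn_adjoint i K hK (hF1 Λ)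
  have hGsum : (∑ j, (oneSite i (K j))ᴴ * H * oneSite i (K j)) = ∑ Λ, G Λ := by
    rw [hF2, hG]
    rw [Finset.sum_comm]
    refine Finset.sum_congr rfl fun j _ => ?_
    rw [Finset.mul_sum, Finset.sum_mul]
  have hGop : ∀ Λ, opNorm (G Λ) ≤ opNorm (F Λ) := by
    intro Λ
    obtain ⟨M, hM, hFΛ⟩ := hF1 Λ
    have hFherm : (F Λ).IsHermitian := by rw [hFΛ]; exact embed_isHermitian hM
    exact opNorm_kraus_le (fun j => oneSite i (K j)) (oneSite_kraus_sum i K hK) hFherm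
  have hmem : (2 * ⨆ x : Fin n, ∑ Λ ∈ Finset.univ.filter (fun Λ : Finset (Fin n) => x ∈ Λ),
      c Λ.card * opNorm (G Λ)) ∈ { r : ℝ | ∃ F' : Finset (Fin n) → QMat (Fin n),
      (∀ Λ, ActsOn Λ (F' Λ)) ∧
      (∑ j, (oneSite i (K j))ᴴ * H * oneSite i (K j)) = ∑ Λ, F' Λ ∧
      r = 2 * ⨆ x : Fin n, ∑ Λ ∈ Finset.univ.filter (fun Λ : Finset (Fin n) => x ∈ Λ),
        c Λ.card * opNorm (F' Λ) } := ⟨G, hGacts, hGsum, rfl⟩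
  have hbdd : BddBelow { r : ℝ | ∃ F' : Finset (Fin n) → QMat (Fin n),
      (∀ Λ, ActsOn Λ (F' Λ)) ∧
      (∑ j, (oneSite i (K j))ᴴ * H * oneSite i (K j)) = ∑ Λ, F' Λ ∧
      r = 2 * ⨆ x : Fin n, ∑ Λ ∈ Finset.univ.filter (fun Λ : Finset (Fin n) => x ∈ Λ),
        c Λ.card * opNorm (F' Λ) } :=
    ⟨0, fun r hr => localNorm_set_nonneg c hc1 hcmono _ r hr⟩
  refine le_trans (csInf_le hbdd hmem) ?_
  have hsup : (⨆ x : Fin n, ∑ Λ ∈ Finset.univ.filter (fun Λ : Finset (Fin n) => x ∈ Λ),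
      c Λ.card * opNorm (G Λ))
      ≤ ⨆ x : Fin n, ∑ Λ ∈ Finset.univ.filter (fun Λ : Finset (Fin n) => x ∈ Λ),
        c Λ.card * opNorm (F Λ) := by
    refine Real.iSup_le (fun x => ?_)
      (Real.iSup_nonneg fun x => siteSum_nonneg c hc1 hcmono F x)
    refine le_trans (Finset.sum_le_sum fun Λ hΛ => ?_)
      (le_ciSup (f := fun x : Fin n => ∑ Λ ∈ Finset.univ.filter
        (fun Λ : Finset (Fin n) => x ∈ Λ), c Λ.card * opNorm (F Λ))
        (Set.Finite.bddAbove (Set.finite_range _)) x)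
    have hx : x ∈ Λ := (Finset.mem_filter.mp hΛ).2
    exact mul_le_mul_of_nonneg_left (hGop Λ)
      (le_trans zero_le_one (c_ge_one c hc1 hcmono hx))
  linarith

lemma trace_channel_dual {m : ℕ} (i : Fin n) (K : Fin m → Matrix (Fin 2) (Fin 2) ℂ)
    (Δ H : QMat (Fin n)) :
    ((∑ j, oneSite i (K j) * Δ * (oneSite i (K j))ᴴ) * H).trace
      = (Δ * ∑ j, (oneSite i (K j))ᴴ * H * oneSite i (K j)).trace := by
  rw [Finset.sum_mul, Matrix.trace_sum, Finset.mul_sum, Matrix.trace_sum]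
  refine Finset.sum_congr rfl fun j _ => ?_
  rw [show oneSite i (K j) * Δ * (oneSite i (K j))ᴴ * H
      = oneSite i (K j) * (Δ * ((oneSite i (K j))ᴴ * H)) by
    simp only [Matrix.mul_assoc]]
  rw [Matrix.trace_mul_comm]
  simp only [Matrix.mul_assoc]

/-- the set defining `W1loc` is bounded above (when `Δ` is traceless) -/
lemma W1loc_set_bddAbove (c : ℕ → ℝ) (hc1 : c 1 = 1)
    (hcmono : ∀ k l, 1 ≤ k → k ≤ l → l ≤ n → c k ≤ c l)
    (Δ : QMat (Fin n)) (hΔtr : Δ.trace = 0) :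
    BddAbove { r : ℝ | ∃ H : QMat (Fin n), H.IsHermitian ∧ localNorm c H ≤ 1 ∧
      r = ((Δ * H).trace).re } := by
  classical
  set B1 : ℝ := Real.sqrt (∑ fg : (Fin n → Fin 2) × (Fin n → Fin 2),
      Complex.normSq (Δ fg.1 fg.2)) *
    Real.sqrt (Fintype.card (Fin n → Fin 2)) with hB1
  have hB1nn : 0 ≤ B1 := mul_nonneg (Real.sqrt_nonneg _) (Real.sqrt_nonneg _)
  refine ⟨(Fintype.card (Finset (Fin n))) * B1, ?_⟩
  rintro r ⟨H, hH, hln, rfl⟩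
  rw [show localNorm c H = sInf { r : ℝ | ∃ F : Finset (Fin n) → QMat (Fin n),
      (∀ Λ, ActsOn Λ (F Λ)) ∧ H = ∑ Λ, F Λ ∧
      r = 2 * ⨆ x : Fin n, ∑ Λ ∈ Finset.univ.filter (fun Λ : Finset (Fin n) => x ∈ Λ),
        c Λ.card * opNorm (F Λ) } from rfl] at hln
  -- extract a decomposition with value < 2
  have hne := localNorm_set_nonempty c hH
  have hlt : sInf { r : ℝ | ∃ F : Finset (Fin n) → QMat (Fin n),
      (∀ Λ, ActsOn Λ (F Λ)) ∧ H = ∑ Λ, F Λ ∧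
      r = 2 * ⨆ x : Fin n, ∑ Λ ∈ Finset.univ.filter (fun Λ : Finset (Fin n) => x ∈ Λ),
        c Λ.card * opNorm (F Λ) } < 2 := lt_of_le_of_lt hln one_lt_two
  obtain ⟨s, hsmem, hslt⟩ := exists_lt_of_csInf_lt hne hlt
  obtain ⟨F, hF1, hF2, hseq⟩ := hsmem
  -- opNorm bound for nonempty Λ
  have hop : ∀ Λ : Finset (Fin n), Λ.Nonempty → opNorm (F Λ) ≤ 1 := by
    intro Λ hΛne
    obtain ⟨x, hx⟩ := hΛne
    have hsup_lt : (⨆ x : Fin n, ∑ Λ ∈ Finset.univ.filter (fun Λ : Finset (Fin n) => x ∈ Λ),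
        c Λ.card * opNorm (F Λ)) < 1 := by
      rw [hseq] at hslt
      linarith
    have hterm : c Λ.card * opNorm (F Λ)
        ≤ ∑ Λ' ∈ Finset.univ.filter (fun Λ' : Finset (Fin n) => x ∈ Λ'),
          c Λ'.card * opNorm (F Λ') := by
      refine Finset.single_le_sum (f := fun Λ' => c Λ'.card * opNorm (F Λ'))
        (fun Λ' hΛ' => mul_nonneg (le_trans zero_le_one
          (c_ge_one c hc1 hcmono (Finset.mem_filter.mp hΛ').2)) (opNorm_nonneg _)) ?_
      exact Finset.mem_filter.mpr ⟨Finset.mem_univ Λ, hx⟩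
    have hsum_le : (∑ Λ' ∈ Finset.univ.filter (fun Λ' : Finset (Fin n) => x ∈ Λ'),
        c Λ'.card * opNorm (F Λ'))
        ≤ ⨆ x : Fin n, ∑ Λ ∈ Finset.univ.filter (fun Λ : Finset (Fin n) => x ∈ Λ),
          c Λ.card * opNorm (F Λ) :=
      le_ciSup (f := fun x : Fin n => ∑ Λ ∈ Finset.univ.filter
        (fun Λ : Finset (Fin n) => x ∈ Λ), c Λ.card * opNorm (F Λ))
        (Set.Finite.bddAbove (Set.finite_range _)) x
    have h1 : c Λ.card * opNorm (F Λ) ≤ 1 := by linarith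
    have h2 : opNorm (F Λ) ≤ c Λ.card * opNorm (F Λ) :=
      le_mul_of_one_le_left (opNorm_nonneg _) (c_ge_one c hc1 hcmono hx)
    linarith
  -- per-Λ trace bound
  have htr : ∀ Λ : Finset (Fin n), |((Δ * F Λ).trace).re| ≤ B1 := by
    intro Λ
    by_cases hΛ : Λ = ∅
    · subst hΛ
      obtain ⟨M, _, hFΛ⟩ := hF1 ∅
      have hzero : ((Δ * F ∅).trace) = 0 := by
        rw [hFΛ, embed_empty_eq_smul_one M
          (fun x => absurd x.2 (Finset.notMem_empty x.1)), Matrix.mul_smul, Matrix.mul_one,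
          Matrix.trace_smul, hΔtr, smul_zero]
      rw [hzero]
      simpa using hB1nn
    · have hΛne : Λ.Nonempty := Finset.nonempty_iff_ne_empty.mpr hΛ
      have h1 := abs_re_trace_mul_le Δ (F Λ)
      have hcard : (0:ℝ) ≤ (Fintype.card (Fin n → Fin 2) : ℝ) := Nat.cast_nonneg _
      have hsq : opNorm (F Λ) ^ 2 ≤ 1 := by
        have h3 := hop Λ hΛne
        nlinarith [opNorm_nonneg (F Λ)]
      have h2 : Real.sqrt (∑ fg : (Fin n → Fin 2) × (Fin n → Fin 2),
          Complex.normSq ((F Λ) fg.1 fg.2)) ≤ Real.sqrt (Fintype.card (Fin n → Fin 2)) := by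
        refine Real.sqrt_le_sqrt (le_trans (sum_normSq_le_card_mul_opNorm_sq (F Λ)) ?_)
        nlinarith
      refine le_trans h1 ?_
      rw [hB1]
      exact mul_le_mul_of_nonneg_left h2 (Real.sqrt_nonneg _)
  -- sum up
  have hsplit : ((Δ * H).trace) = ∑ Λ : Finset (Fin n), (Δ * F Λ).trace := by
    rw [hF2, Finset.mul_sum, Matrix.trace_sum]
  calc ((Δ * H).trace).re = ∑ Λ : Finset (Fin n), ((Δ * F Λ).trace).re := by
        rw [hsplit, Complex.re_sum]
    _ ≤ ∑ Λ : Finset (Fin n), |((Δ * F Λ).trace).re| :=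
        Finset.sum_le_sum fun Λ _ => le_abs_self _
    _ ≤ (Fintype.card (Finset (Fin n))) * B1 := by
        refine le_trans (Finset.sum_le_card_nsmul Finset.univ _ B1 fun Λ _ => htr Λ) ?_
        rw [Finset.card_univ, nsmul_eq_mul]

end MainAux

end QW1

open QW1 Matrix Complex

/-- The local quantum `W₁` norm is contracting with respect to the action of
single-qubit quantum channels (given in Kraus form, acting on the qubit `i`). -/
theorem stmt8 {n m : ℕ} (c : ℕ → ℝ) (hc1 : c 1 = 1)
    (hcmono : ∀ k l, 1 ≤ k → k ≤ l → l ≤ n → c k ≤ c l)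
    (Δ : QMat (Fin n)) (hΔ : Δ.IsHermitian) (hΔtr : Δ.trace = 0)
    (i : Fin n) (K : Fin m → Matrix (Fin 2) (Fin 2) ℂ)
    (hK : ∑ j, (K j)ᴴ * K j = 1) :
    W1loc c (∑ j, oneSite i (K j) * Δ * (oneSite i (K j))ᴴ) ≤ W1loc c Δ := by
  classical
  unfold W1loc
  refine csSup_le_csSup (W1loc_set_bddAbove c hc1 hcmono Δ hΔtr) ?_ ?_
  · refine ⟨0, 0, Matrix.isHermitian_zero, localNorm_zero_le_one c hc1 hcmono, ?_⟩
    rw [Matrix.mul_zero, Matrix.trace_zero, Complex.zero_re]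
  · rintro r ⟨H, hH, hln, rfl⟩
    exact ⟨∑ j, (oneSite i (K j))ᴴ * H * oneSite i (K j),
      kraus_isHermitian _ hH,
      le_trans (localNorm_adjoint_le c hc1 hcmono i K hK hH) hln,
      by rw [trace_channel_dual]⟩
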